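/- Let a > 1 and λ > 0. Then the log-Poisson moment relations hold: for every k ∈ ℕ₀, ∑_{j=0}^∞ a^{kj} (λ^j e^{-λ}/j!) · ((-1)^j e^λ j! a^{-j(j-1)/2} / (λ^j (1/a;1/a)_j)) = 0, i.e. the perturbation h̃_j = (-1)^j e^λ j! a^{-j(j-1)/2}/(λ^j (1/a;1/a)_j) annihilates all moments of Y = a^X for X Poisson(λ). -/

import Mathlib

open Filter

noncomputable def lpC (a : ℝ) (j : ℕ) : ℝ :=
  (-1 : ℝ) ^ j * (a⁻¹) ^ (j * (j - 1) / 2) /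
    ∏ s ∈ Finset.range j, (1 - (a⁻¹) ^ (s + 1))

lemma lpProd_pos (a : ℝ) (ha : 1 < a) (j : ℕ) :
    0 < ∏ s ∈ Finset.range j, (1 - (a⁻¹) ^ (s + 1)) := by
  have hq0 : (0:ℝ) < a⁻¹ := inv_pos.2 (lt_trans one_pos ha)
  have hq1 : a⁻¹ < 1 := inv_lt_one_of_one_lt₀ ha
  refine Finset.prod_pos fun s _ => ?_
  have : a⁻¹ ^ (s + 1) < 1 := pow_lt_one₀ hq0.le hq1 (Nat.succ_ne_zero s)
  linarith

lemma lpTri (j : ℕ) : (j + 1) * ((j + 1) - 1) / 2 = j * (j - 1) / 2 + j := by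
  rw [← Finset.sum_range_id, ← Finset.sum_range_id, Finset.sum_range_succ]

lemma lpC_rec (a : ℝ) (ha : 1 < a) (j : ℕ) :
    lpC a (j + 1) * (1 - (a⁻¹) ^ (j + 1)) = -(lpC a j * (a⁻¹) ^ j) := by
  have hP := (lpProd_pos a ha j).ne'
  have h1 : (1 : ℝ) - (a⁻¹) ^ (j + 1) ≠ 0 := by
    have hq0 : (0:ℝ) < a⁻¹ := inv_pos.2 (lt_trans one_pos ha)
    have hq1 : a⁻¹ < 1 := inv_lt_one_of_one_lt₀ ha
    have : a⁻¹ ^ (j + 1) < 1 := pow_lt_one₀ hq0.le hq1 (Nat.succ_ne_zero j)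
    linarith
  unfold lpC
  rw [Finset.prod_range_succ, lpTri, pow_add]
  rw [show ∀ x P c : ℝ, P ≠ 0 → c ≠ 0 → x / (P * c) * c = x / P from
    fun x P c hP hc => by field_simp, pow_succ]
  · ring
  · exact hP
  · exact h1

lemma lpSummable (a : ℝ) (ha : 1 < a) (t : ℝ) :
    Summable (fun j : ℕ => lpC a j * t ^ j) := by
  have hq0 : (0:ℝ) < a⁻¹ := inv_pos.2 (lt_trans one_pos ha)
  have hq1 : a⁻¹ < 1 := inv_lt_one_of_one_lt₀ ha
  set q := a⁻¹ with hq
  apply summable_of_ratio_norm_eventually_le (r := 1/2) (by norm_num)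
  have hlim : Tendsto (fun j : ℕ => q ^ j * |t|) atTop (nhds 0) := by
    simpa using (tendsto_pow_atTop_nhds_zero_of_lt_one hq0.le hq1).mul_const |t|
  have hev : ∀ᶠ j : ℕ in atTop, q ^ j * |t| < (1 - q) / 2 := by
    apply hlim.eventually_lt_const
    linarith
  filter_upwards [hev] with j hj
  have hpow : (0:ℝ) < 1 - q ^ (j + 1) := by
    have : q ^ (j + 1) < 1 := pow_lt_one₀ hq0.le hq1 (Nat.succ_ne_zero j)
    linarith
  have hrec := lpC_rec a ha j
  have habs : |lpC a (j + 1)| * (1 - q ^ (j + 1)) = |lpC a j| * q ^ j := by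
    have := congrArg abs hrec
    rw [abs_mul, abs_neg, abs_mul, abs_of_pos hpow, abs_of_nonneg (pow_nonneg hq0.le j)] at this
    exact this
  have hle : q ^ (j + 1) ≤ q := by
    calc q ^ (j + 1) ≤ q ^ 1 := pow_le_pow_of_le_one hq0.le hq1.le (by omega)
    _ = q := pow_one q
  have hcj1 : |lpC a (j + 1)| = |lpC a j| * q ^ j / (1 - q ^ (j + 1)) := by
    field_simp at habs ⊢
    linarith [habs]
  rw [norm_mul, norm_mul, norm_pow, norm_pow, Real.norm_eq_abs, Real.norm_eq_abs,
    Real.norm_eq_abs, hcj1]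
  have htnn : (0:ℝ) ≤ |t| := abs_nonneg t
  have hcjnn : (0:ℝ) ≤ |lpC a j| := abs_nonneg _
  have key : q ^ j * |t| / (1 - q ^ (j + 1)) ≤ 1 / 2 := by
    rw [div_le_iff₀ hpow]
    nlinarith [pow_nonneg hq0.le j]
  have expand : |lpC a j| * q ^ j / (1 - q ^ (j + 1)) * |t| ^ (j + 1)
      = (q ^ j * |t| / (1 - q ^ (j + 1))) * (|lpC a j| * |t| ^ j) := by
    rw [pow_succ]; field_simp; ring
  rw [expand]
  have : (0:ℝ) ≤ |lpC a j| * |t| ^ j := by positivity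
  nlinarith [key, this]

noncomputable def lpS (a t : ℝ) : ℝ := ∑' j : ℕ, lpC a j * t ^ j

lemma lpS_feq (a : ℝ) (ha : 1 < a) (t : ℝ) :
    lpS a t = (1 - t) * lpS a (a⁻¹ * t) := by
  set q := a⁻¹ with hq
  set A : ℕ → ℝ := fun j => lpC a j * (q * t) ^ j with hA
  have hAs : Summable A := lpSummable a ha (q * t)
  set D : ℕ → ℝ := fun j => match j with
    | 0 => 0
    | n + 1 => lpC a n * q ^ n * t ^ (n + 1) with hD
  have hshift : (fun n : ℕ => D (n + 1)) = fun n => A n * t := by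
    funext n
    show lpC a n * q ^ n * t ^ (n + 1) = lpC a n * (q * t) ^ n * t
    rw [mul_pow, pow_succ]; ring
  have hDshift : Summable (fun n : ℕ => D (n + 1)) := by
    rw [hshift]; exact hAs.mul_right t
  have hDs : Summable D := (summable_nat_add_iff 1).1 hDshift
  have hTD : ∑' j, D j = t * lpS a (q * t) := by
    rw [Summable.tsum_eq_zero_add hDs]
    show (0:ℝ) + ∑' n, D (n + 1) = _
    rw [hshift, zero_add, tsum_mul_right]
    unfold lpS; ring
  have hsub : lpS a t = ∑' j, (A j - D j) := by
    apply (tsum_congr ?_).symm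
    intro j
    match j with
    | 0 => simp [hA, hD]
    | n + 1 =>
      show lpC a n.succ * (q * t) ^ (n + 1) - lpC a n * q ^ n * t ^ (n + 1)
          = lpC a (n + 1) * t ^ (n + 1)
      have hrec := lpC_rec a ha n
      rw [mul_pow]
      linear_combination (-(t ^ (n + 1))) * hrec
  rw [hsub, Summable.tsum_sub hAs hDs, hTD]
  unfold lpS
  ring

lemma lpS_zero (a : ℝ) (ha : 1 < a) (k : ℕ) : lpS a (a ^ k) = 0 := by
  have hane : a ≠ 0 := by linarith
  induction k with
  | zero =>
    have h := lpS_feq a ha 1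
    rw [pow_zero, h]; ring
  | succ n ih =>
    rw [lpS_feq a ha]
    have : a⁻¹ * a ^ (n + 1) = a ^ n := by
      rw [pow_succ]; field_simp
    rw [this, ih, mul_zero]

theorem log_poisson_moments (a lam : ℝ) (ha : 1 < a) (hlam : 0 < lam) (k : ℕ) :
    (∑' j : ℕ,
      a ^ (k * j) * (lam ^ j * Real.exp (-lam) / (j.factorial : ℝ)) *
        ((-1 : ℝ) ^ j * Real.exp lam * (j.factorial : ℝ) * (a ^ (j * (j - 1) / 2))⁻¹ /
          (lam ^ j * ∏ s ∈ Finset.range j, (1 - (a⁻¹) ^ (s + 1))))) = 0 := by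
  have h : (∑' j : ℕ,
      a ^ (k * j) * (lam ^ j * Real.exp (-lam) / (j.factorial : ℝ)) *
        ((-1 : ℝ) ^ j * Real.exp lam * (j.factorial : ℝ) * (a ^ (j * (j - 1) / 2))⁻¹ /
          (lam ^ j * ∏ s ∈ Finset.range j, (1 - (a⁻¹) ^ (s + 1)))))
      = lpS a (a ^ k) := by
    unfold lpS
    apply tsum_congr
    intro j
    have hP := (lpProd_pos a ha j).ne'
    have hlne : lam ^ j ≠ 0 := pow_ne_zero j hlam.ne'
    have hfne : (j.factorial : ℝ) ≠ 0 := Nat.cast_ne_zero.2 j.factorial_ne_zero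
    have hene : Real.exp lam ≠ 0 := Real.exp_ne_zero lam
    unfold lpC
    rw [pow_mul, Real.exp_neg, ← inv_pow]
    rw [show ∀ A B L E F Q P : ℝ, E ≠ 0 → F ≠ 0 → L ≠ 0 → P ≠ 0 →
        A * (L * E⁻¹ / F) * (B * E * F * Q / (L * P)) = B * Q / P * A from
      fun A B L E F Q P hE hF hL hP => by field_simp]
    · exact hene
    · exact hfne
    · exact hlne
    · exact hP
  rw [h, lpS_zero a ha k]
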